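/- Let Q be a finite set and T_1,…,T_s : Q → ℕ. Suppose p : Q → ℝ is strictly positive and for every integer vector k : Q → ℤ satisfying ∑_{x ∈ Q} k(x)·T_j(x) = 0 for all j = 1,…,s, one has ∏_{x ∈ Q} p(x)^{k(x)⁺} = ∏_{x ∈ Q} p(x)^{k(x)⁻}. Then the function x ↦ log p(x) lies in the real linear span of {T_1,…,T_s} in ℝ^Q. Hence, for strictly positive p, the log-linear model and the implicit binomial model are equivalent. -/

import Mathlib

/-- If `p` is strictly positive and satisfies the implicit binomial equation
`∏ₓ p(x)^{k(x)⁺} = ∏ₓ p(x)^{k(x)⁻}` for every integer vector `k` orthogonal to all the design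
functions `T_j`, then `log p` lies in the real linear span of `T₁,…,T_s`; hence for strictly
positive `p` the log-linear model and the implicit binomial model are equivalent. -/
theorem implicit_binomial_implies_loglinear
    {Q : Type*} [Fintype Q] (s : ℕ) (T : Fin s → Q → ℕ)
    (p : Q → ℝ) (hp : ∀ x, 0 < p x)
    (hbin : ∀ k : Q → ℤ, (∀ j, ∑ x, k x * (T j x : ℤ) = 0) →
      ∏ x, p x ^ (k x).toNat = ∏ x, p x ^ (-(k x)).toNat) :
    (fun x => Real.log (p x)) ∈
      Submodule.span ℝ (Set.range fun j : Fin s => fun x : Q => (T j x : ℝ)) := by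
  classical
  set L : Q → ℝ := fun x => Real.log (p x) with hL
  -- the linear map φ : ℤ^Q → ℤ^s
  let φ : (Q → ℤ) →ₗ[ℤ] (Fin s → ℤ) :=
    { toFun := fun k j => ∑ x, k x * (T j x : ℤ)
      map_add' := by
        intro k k'; funext j
        simp [add_mul, Finset.sum_add_distrib]
      map_smul' := by
        intro c k; funext j
        simp [Finset.mul_sum, mul_assoc] }
  -- the linear map λL : ℤ^Q → ℝ
  let lam : (Q → ℤ) →ₗ[ℤ] ℝ :=
    { toFun := fun k => ∑ x, (k x : ℝ) * L x
      map_add' := by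
        intro k k'
        simp [add_mul, Finset.sum_add_distrib]
      map_smul' := by
        intro c k
        simp [Finset.mul_sum, mul_assoc] }
  -- ker φ ≤ ker lam
  have hker : LinearMap.ker φ ≤ LinearMap.ker lam := by
    intro k hk
    have hk' : ∀ j, ∑ x, k x * (T j x : ℤ) = 0 := fun j =>
      congrFun (LinearMap.mem_ker.mp hk) j
    have hb := hbin k hk'
    have hlog := congrArg Real.log hb
    rw [Real.log_prod (fun x _ => pow_ne_zero _ (hp x).ne'),
        Real.log_prod (fun x _ => pow_ne_zero _ (hp x).ne')] at hlog
    simp only [Real.log_pow] at hlog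
    have : ∑ x, (k x : ℝ) * L x = 0 := by
      have := sub_eq_zero.mpr hlog
      rw [← Finset.sum_sub_distrib] at this
      rw [← this]
      apply Finset.sum_congr rfl
      intro x _
      have hx : ((k x).toNat : ℝ) - ((-(k x)).toNat : ℝ) = (k x : ℝ) := by
        have := Int.toNat_sub_toNat_neg (k x)
        exact_mod_cast congrArg (fun z : ℤ => (z : ℝ)) this
      rw [← sub_mul, hx]
    simpa [lam] using this
  -- factor lam through the range of φ
  let lam' : LinearMap.range φ →ₗ[ℤ] ℝ :=
    (Submodule.liftQ (LinearMap.ker φ) lam hker) ∘ₗ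
      (φ.quotKerEquivRange.symm : LinearMap.range φ →ₗ[ℤ] _)
  -- extend lam' to all of ℤ^s using divisibility of ℝ
  obtain ⟨ψ, hψ⟩ := (Module.Baer.of_divisible ℝ).extension_property
    (LinearMap.range φ).subtype Subtype.val_injective lam'
  have hψφ : ∀ k : Q → ℤ, ψ (φ k) = lam k := by
    intro k
    have h1 : φ k = (LinearMap.range φ).subtype ⟨φ k, LinearMap.mem_range_self φ k⟩ := rfl
    rw [h1, ← LinearMap.comp_apply, hψ]
    show (Submodule.liftQ (LinearMap.ker φ) lam hker)
      (φ.quotKerEquivRange.symm ⟨φ k, LinearMap.mem_range_self φ k⟩) = lam k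
    rw [LinearMap.quotKerEquivRange_symm_apply_image]
    simp
  set a : Fin s → ℝ := fun j => ψ (Pi.single j 1) with ha
  have key : ∀ x, L x = ∑ j, a j * (T j x : ℝ) := by
    intro x
    have h1 : lam (Pi.single x 1) = L x := by
      simp [lam, Pi.single_apply, Finset.sum_ite_eq']
    have h2 : φ (Pi.single x 1) = fun j => (T j x : ℤ) := by
      funext j
      simp [φ, Pi.single_apply, Finset.sum_ite_eq']
    have h3 : (fun j => (T j x : ℤ)) = ∑ j, (T j x : ℤ) • Pi.single j (1 : ℤ) := by
      funext i
      simp [Pi.single_apply, Finset.sum_ite_eq']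
    have h4 : ψ (∑ j, (T j x : ℤ) • Pi.single j (1 : ℤ)) = L x := by
      rw [← h3, ← h2, hψφ, h1]
    rw [map_sum] at h4
    rw [← h4]
    apply Finset.sum_congr rfl
    intro j _
    rw [map_zsmul, zsmul_eq_mul]
    push_cast
    ring
  have heq : L = ∑ j, a j • (fun x : Q => (T j x : ℝ)) := by
    funext x
    simp only [Finset.sum_apply, Pi.smul_apply, smul_eq_mul]
    exact key x
  show L ∈ _
  rw [heq]
  exact Submodule.sum_mem _ fun j _ => Submodule.smul_mem _ _
    (Submodule.subset_span ⟨j, rfl⟩)
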